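/- Assume pq = 1. Then V 𝓛 V⁻¹ = −(1/2)√(pq) Σ_{j=1}^{L−1} [ σˣ_j σˣ_{j+1} + σʸ_j σʸ_{j+1} + ((τ+τ⁻¹)/2) σᶻ_j σᶻ_{j+1} − ((τ+τ⁻¹)/2)·I ] − A₁⁺ σˣ₁ − i A₁⁻ σʸ₁ − B₁ σᶻ₁ − A_L⁺ σˣ_L − i A_L⁻ σʸ_L − B_L σᶻ_L + (1/2)(α+β+γ+δ)·I, where A₁^± := (1/2)(γτ ± ατ⁻¹), B₁ := (1/2)(γ−α) + (1/4)(τ−τ⁻¹), A_L^± := (1/2)(βτ^L ± δτ^{−L}), and B_L := (1/2)(β−δ) − (1/4)(τ−τ⁻¹). -/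

import Mathlib

open Matrix Complex

noncomputable section

/-- A particle configuration on `L` sites: each site is a hole (`0`) or a particle (`1`). -/
abbrev Conf (L : ℕ) := Fin L → Fin 2

/-- The 2×2 matrix `A` acting on the `j`-th tensor factor (0-based index) of `(ℂ²)^{⊗L}`
and the identity elsewhere.  (For `j ≥ L` this is the identity.) -/
def site (L : ℕ) (A : Matrix (Fin 2) (Fin 2) ℂ) (j : ℕ) :
    Matrix (Conf L) (Conf L) ℂ :=
  Matrix.of fun η' η =>
    if h : j < L then
      A (η' ⟨j, h⟩) (η ⟨j, h⟩) *
        ∏ k ∈ Finset.univ.erase (⟨j, h⟩ : Fin L), (if η' k = η k then (1 : ℂ) else 0)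
    else (if η' = η then (1 : ℂ) else 0)

def sigmaPlus : Matrix (Fin 2) (Fin 2) ℂ := !![0, 1; 0, 0]
def sigmaMinus : Matrix (Fin 2) (Fin 2) ℂ := !![0, 0; 1, 0]
def numOp : Matrix (Fin 2) (Fin 2) ℂ := !![0, 0; 0, 1]
def sigmaX : Matrix (Fin 2) (Fin 2) ℂ := !![0, 1; 1, 0]
def sigmaY : Matrix (Fin 2) (Fin 2) ℂ := !![0, -Complex.I; Complex.I, 0]
def sigmaZ : Matrix (Fin 2) (Fin 2) ℂ := !![1, 0; 0, -1]

/-- The open ASEP generator `𝓛` on `L` sites with bulk rates `p` (right), `q` (left),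
left-boundary entry/exit rates `α, γ` and right-boundary entry/exit rates `δ, β`.
Lattice sites are 0-based, so site `1` of the paper is index `0` and site `L` is `L-1`. -/
def asepGen (L : ℕ) (p q α β γ δ : ℝ) : Matrix (Conf L) (Conf L) ℂ :=
  (-((Real.sqrt (p * q) : ℝ) : ℂ)) •
    (∑ j ∈ Finset.range (L - 1),
      (((Real.sqrt (p / q) : ℝ) : ℂ)⁻¹ •
          (site L sigmaMinus j * site L sigmaPlus (j + 1)
            - site L (1 - numOp) j * site L numOp (j + 1))
        + ((Real.sqrt (p / q) : ℝ) : ℂ) •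
          (site L sigmaMinus (j + 1) * site L sigmaPlus j
            - site L numOp j * site L (1 - numOp) (j + 1))))
  - (α : ℂ) • (site L sigmaMinus 0 - 1 + site L numOp 0)
  - (γ : ℂ) • (site L sigmaPlus 0 - site L numOp 0)
  - (δ : ℂ) • (site L sigmaMinus (L - 1) - 1 + site L numOp (L - 1))
  - (β : ℂ) • (site L sigmaPlus (L - 1) - site L numOp (L - 1))

/-- The diagonal matrix `V` acting on a configuration basis vector `e_η` by
`τ^{-Σ_j j η_j}` (with 1-based site labels as in the paper). -/
def Vmat (L : ℕ) (τ : ℂ) : Matrix (Conf L) (Conf L) ℂ :=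
  Matrix.diagonal fun η : Conf L =>
    τ ^ (-(∑ j : Fin L, (((j : ℕ) : ℤ) + 1) * ((η j : ℕ) : ℤ)))

def Phi (L : ℕ) (M : Fin L → Matrix (Fin 2) (Fin 2) ℂ) : Matrix (Conf L) (Conf L) ℂ :=
  Matrix.of fun η' η => ∏ l, M l (η' l) (η l)

lemma Phi_mul (L : ℕ) (M N : Fin L → Matrix (Fin 2) (Fin 2) ℂ) :
    Phi L M * Phi L N = Phi L (fun l => M l * N l) := by
  ext η' η
  simp only [Phi, Matrix.mul_apply, Matrix.of_apply]
  rw [Finset.prod_univ_sum]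
  simp [Finset.prod_mul_distrib]

lemma Phi_one (L : ℕ) : Phi L (fun _ => 1) = 1 := by
  ext η' η
  simp only [Phi, Matrix.of_apply, Matrix.one_apply]
  by_cases h : η' = η
  · subst h; simp
  · rw [if_neg h]
    obtain ⟨l, hl⟩ : ∃ l, η' l ≠ η l := Function.ne_iff.mp h
    exact Finset.prod_eq_zero (Finset.mem_univ l) (by simp [Matrix.one_apply, hl])

lemma site_eq_Phi (L : ℕ) (A : Matrix (Fin 2) (Fin 2) ℂ) (j : ℕ) (h : j < L) :
    site L A j = Phi L (fun l => if l = ⟨j, h⟩ then A else 1) := by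
  ext η' η
  simp only [site, Phi, Matrix.of_apply, dif_pos h]
  rw [← Finset.prod_erase_mul _ _ (Finset.mem_univ (⟨j, h⟩ : Fin L))]
  rw [mul_comm]
  congr 1
  · apply Finset.prod_congr rfl
    intro k hk
    rw [if_neg (Finset.mem_erase.mp hk).1]
    simp [Matrix.one_apply]
  · simp

lemma Phi_congr {L : ℕ} {M N : Fin L → Matrix (Fin 2) (Fin 2) ℂ}
    (h : ∀ l, M l = N l) : Phi L M = Phi L N := by
  rw [funext h]

lemma site_one {L : ℕ} {j : ℕ} (h : j < L) : site L 1 j = 1 := by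
  rw [site_eq_Phi L 1 j h]
  simp only [ite_self]
  exact Phi_one L

lemma site_smul {L : ℕ} {j : ℕ} (h : j < L) (c : ℂ) (A : Matrix (Fin 2) (Fin 2) ℂ) :
    site L (c • A) j = c • site L A j := by
  ext η' η
  simp only [site, Matrix.of_apply, dif_pos h, Matrix.smul_apply, smul_eq_mul, mul_assoc]

lemma site_add {L : ℕ} {j : ℕ} (h : j < L) (A B : Matrix (Fin 2) (Fin 2) ℂ) :
    site L (A + B) j = site L A j + site L B j := by
  ext η' η
  simp only [site, Matrix.of_apply, dif_pos h, Matrix.add_apply, add_mul]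

lemma site_sub {L : ℕ} {j : ℕ} (h : j < L) (A B : Matrix (Fin 2) (Fin 2) ℂ) :
    site L (A - B) j = site L A j - site L B j := by
  ext η' η
  simp only [site, Matrix.of_apply, dif_pos h, Matrix.sub_apply, sub_mul]

lemma site_mul_same {L : ℕ} {j : ℕ} (h : j < L) (A B : Matrix (Fin 2) (Fin 2) ℂ) :
    site L A j * site L B j = site L (A * B) j := by
  rw [site_eq_Phi L A j h, site_eq_Phi L B j h, Phi_mul, site_eq_Phi L (A*B) j h]
  apply Phi_congr
  intro l
  by_cases hl : l = (⟨j, h⟩ : Fin L)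
  · simp [hl]
  · simp [hl]

lemma site_comm {L : ℕ} {j k : ℕ} (h1 : j < L) (h2 : k < L) (hjk : j ≠ k)
    (A B : Matrix (Fin 2) (Fin 2) ℂ) :
    site L A j * site L B k = site L B k * site L A j := by
  rw [site_eq_Phi L A j h1, site_eq_Phi L B k h2, Phi_mul, Phi_mul]
  apply Phi_congr
  intro l
  have hne : (⟨j, h1⟩ : Fin L) ≠ ⟨k, h2⟩ := by simp [Fin.ext_iff, hjk]
  by_cases hl : l = (⟨j, h1⟩ : Fin L)
  · subst hl; simp [hne]
  · by_cases hl' : l = (⟨k, h2⟩ : Fin L)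
    · subst hl'; simp [Ne.symm hne]
    · simp [hl, hl']

open Kronecker in
def lift2 (L j k : ℕ) (h1 : j < L) (h2 : k < L)
    (M : Matrix (Fin 2 × Fin 2) (Fin 2 × Fin 2) ℂ) : Matrix (Conf L) (Conf L) ℂ :=
  Matrix.of fun η' η =>
    M (η' ⟨j, h1⟩, η' ⟨k, h2⟩) (η ⟨j, h1⟩, η ⟨k, h2⟩) *
      ∏ l ∈ (Finset.univ.erase (⟨j, h1⟩ : Fin L)).erase ⟨k, h2⟩,
        (if η' l = η l then (1 : ℂ) else 0)

lemma lift2_add {L j k : ℕ} (h1 : j < L) (h2 : k < L) (M N) :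
    lift2 L j k h1 h2 (M + N) = lift2 L j k h1 h2 M + lift2 L j k h1 h2 N := by
  ext η' η; simp [lift2, add_mul]

lemma lift2_sub {L j k : ℕ} (h1 : j < L) (h2 : k < L) (M N) :
    lift2 L j k h1 h2 (M - N) = lift2 L j k h1 h2 M - lift2 L j k h1 h2 N := by
  ext η' η; simp [lift2, sub_mul]

lemma lift2_smul {L j k : ℕ} (h1 : j < L) (h2 : k < L) (c : ℂ) (M) :
    lift2 L j k h1 h2 (c • M) = c • lift2 L j k h1 h2 M := by
  ext η' η; simp [lift2, mul_assoc]

open Kronecker in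
lemma lift2_kron {L j k : ℕ} (h1 : j < L) (h2 : k < L) (hjk : j ≠ k)
    (A B : Matrix (Fin 2) (Fin 2) ℂ) :
    lift2 L j k h1 h2 (A ⊗ₖ B) = site L A j * site L B k := by
  have hne : (⟨k, h2⟩ : Fin L) ≠ ⟨j, h1⟩ := by simp [Fin.ext_iff]; omega
  rw [site_eq_Phi L A j h1, site_eq_Phi L B k h2, Phi_mul]
  ext η' η
  simp only [lift2, Phi, Matrix.of_apply, Matrix.kroneckerMap_apply]
  rw [← Finset.mul_prod_erase _ _ (Finset.mem_univ (⟨j, h1⟩ : Fin L)),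
    ← Finset.mul_prod_erase _ _ (Finset.mem_erase.mpr ⟨hne, Finset.mem_univ _⟩)]
  have hjk' : (⟨j, h1⟩ : Fin L) ≠ ⟨k, h2⟩ := Ne.symm hne
  rw [if_pos rfl, if_neg hjk', if_neg hne, if_pos rfl, mul_one, one_mul, mul_assoc]
  congr 1
  congr 1
  apply Finset.prod_congr rfl
  intro l hl
  have h1l := Finset.mem_erase.mp hl
  have h2l := Finset.mem_erase.mp h1l.2
  rw [if_neg h2l.1, if_neg h1l.1, one_mul, Matrix.one_apply]

open Kronecker in
lemma lift2_one {L j k : ℕ} (h1 : j < L) (h2 : k < L) (hjk : j ≠ k) :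
    lift2 L j k h1 h2 (1 ⊗ₖ 1) = 1 := by
  rw [lift2_kron h1 h2 hjk, site_one h1, site_one h2, one_mul]

lemma two_sminus : sigmaMinus = (1/2 : ℂ) • sigmaX - (Complex.I/2) • sigmaY := by
  ext a b
  fin_cases a <;> fin_cases b <;>
    simp [sigmaMinus, sigmaX, sigmaY] <;> ring_nf <;> simp [Complex.I_sq] <;> ring

lemma two_splus : sigmaPlus = (1/2 : ℂ) • sigmaX + (Complex.I/2) • sigmaY := by
  ext a b
  fin_cases a <;> fin_cases b <;>
    simp [sigmaPlus, sigmaX, sigmaY] <;> ring_nf <;> simp [Complex.I_sq] <;> ring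

lemma two_num : numOp = (1/2 : ℂ) • 1 - (1/2 : ℂ) • sigmaZ := by
  ext a b
  fin_cases a <;> fin_cases b <;>
    simp [numOp, sigmaZ, Matrix.one_apply] <;> ring

open Kronecker in
lemma kron_id (τ : ℂ) :
    sigmaMinus ⊗ₖ sigmaPlus + sigmaPlus ⊗ₖ sigmaMinus
      - τ⁻¹ • ((1 - numOp) ⊗ₖ numOp) - τ • (numOp ⊗ₖ (1 - numOp))
    = (1/2 : ℂ) • (sigmaX ⊗ₖ sigmaX + sigmaY ⊗ₖ sigmaY
        + ((τ + τ⁻¹)/2) • (sigmaZ ⊗ₖ sigmaZ) - ((τ + τ⁻¹)/2) • ((1 : Matrix (Fin 2) (Fin 2) ℂ) ⊗ₖ 1))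
      + ((τ - τ⁻¹)/4) • (sigmaZ ⊗ₖ (1 : Matrix (Fin 2) (Fin 2) ℂ))
      - ((τ - τ⁻¹)/4) • ((1 : Matrix (Fin 2) (Fin 2) ℂ) ⊗ₖ sigmaZ) := by
  ext ⟨a, b⟩ ⟨c, d⟩
  fin_cases a <;> fin_cases b <;> fin_cases c <;> fin_cases d <;>
    simp [sigmaMinus, sigmaPlus, numOp, sigmaX, sigmaY, sigmaZ, Matrix.one_apply,
      Prod.ext_iff, Complex.I_sq] <;> ring

lemma bulk_id (L : ℕ) (τ : ℂ) (j : ℕ) (h2 : j + 1 < L) :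
    site L sigmaMinus j * site L sigmaPlus (j+1) + site L sigmaMinus (j+1) * site L sigmaPlus j
      - τ⁻¹ • (site L (1 - numOp) j * site L numOp (j+1))
      - τ • (site L numOp j * site L (1 - numOp) (j+1))
    = (1/2 : ℂ) • (site L sigmaX j * site L sigmaX (j+1) + site L sigmaY j * site L sigmaY (j+1)
        + ((τ + τ⁻¹)/2) • (site L sigmaZ j * site L sigmaZ (j+1))
        - ((τ + τ⁻¹)/2) • (1 : Matrix (Conf L) (Conf L) ℂ))
      + (((τ - τ⁻¹)/4) • site L sigmaZ j - ((τ - τ⁻¹)/4) • site L sigmaZ (j+1)) := by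
  have h1 : j < L := Nat.lt_of_succ_lt h2
  have hjk : j ≠ j + 1 := by omega
  rw [site_comm h2 h1 (by omega) sigmaMinus sigmaPlus]
  have key := congrArg (lift2 L j (j+1) h1 h2) (kron_id τ)
  simp only [lift2_add, lift2_sub, lift2_smul, lift2_kron h1 h2 hjk] at key
  simp only [site_one h1, site_one h2, mul_one, one_mul] at key
  refine Eq.trans ?_ (key.trans ?_) <;> module

def dMat (τ : ℂ) (j : ℕ) : Matrix (Fin 2) (Fin 2) ℂ :=
  Matrix.diagonal fun x : Fin 2 => (τ⁻¹) ^ ((j + 1) * (x : ℕ))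

def eMat (τ : ℂ) (j : ℕ) : Matrix (Fin 2) (Fin 2) ℂ :=
  Matrix.diagonal fun x : Fin 2 => τ ^ ((j + 1) * (x : ℕ))

lemma Vmat_eq_Phi (L : ℕ) (τ : ℂ) :
    Vmat L τ = Phi L (fun l => dMat τ (l : ℕ)) := by
  ext η' η
  by_cases h : η' = η
  · subst h
    simp only [Vmat, Matrix.diagonal_apply_eq, Phi, Matrix.of_apply, dMat,
      Matrix.diagonal_apply_eq]
    have : (-(∑ j : Fin L, (((j : ℕ) : ℤ) + 1) * ((η' j : ℕ) : ℤ)))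
        = -((∑ j : Fin L, ((j : ℕ) + 1) * ((η' j : ℕ)) : ℕ) : ℤ) := by
      push_cast; ring
    rw [this, _root_.zpow_neg, zpow_natCast, ← inv_pow, ← Finset.prod_pow_eq_pow_sum]
  · simp only [Vmat, Phi, Matrix.of_apply]
    rw [Matrix.diagonal_apply_ne _ h]
    obtain ⟨l, hl⟩ : ∃ l, η' l ≠ η l := Function.ne_iff.mp h
    exact (Finset.prod_eq_zero (Finset.mem_univ l)
      (by simp [dMat, Matrix.diagonal_apply_ne _ hl])).symm

lemma dm_mul_em (τ : ℂ) (hτ : τ ≠ 0) (j : ℕ) : dMat τ j * eMat τ j = 1 := by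
  rw [dMat, eMat, Matrix.diagonal_mul_diagonal]
  ext a b
  rcases eq_or_ne a b with rfl | hab
  · simp [Matrix.diagonal_apply_eq, inv_pow, inv_mul_cancel₀ (pow_ne_zero _ hτ),
      Matrix.one_apply]
  · simp [Matrix.diagonal_apply_ne _ hab, Matrix.one_apply_ne hab]

lemma em_mul_dm (τ : ℂ) (hτ : τ ≠ 0) (j : ℕ) : eMat τ j * dMat τ j = 1 := by
  rw [dMat, eMat, Matrix.diagonal_mul_diagonal]
  ext a b
  rcases eq_or_ne a b with rfl | hab
  · simp [Matrix.diagonal_apply_eq, inv_pow, mul_inv_cancel₀ (pow_ne_zero _ hτ),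
      Matrix.one_apply]
  · simp [Matrix.diagonal_apply_ne _ hab, Matrix.one_apply_ne hab]

lemma V_mul_W (L : ℕ) (τ : ℂ) (hτ : τ ≠ 0) :
    Vmat L τ * Phi L (fun l => eMat τ (l : ℕ)) = 1 := by
  rw [Vmat_eq_Phi, Phi_mul, Phi_congr (fun l => dm_mul_em τ hτ (l : ℕ)), Phi_one]

lemma W_mul_V (L : ℕ) (τ : ℂ) (hτ : τ ≠ 0) :
    Phi L (fun l => eMat τ (l : ℕ)) * Vmat L τ = 1 := by
  rw [Vmat_eq_Phi, Phi_mul, Phi_congr (fun l => em_mul_dm τ hτ (l : ℕ)), Phi_one]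

lemma conj_site (L : ℕ) (τ : ℂ) (hτ : τ ≠ 0) (A : Matrix (Fin 2) (Fin 2) ℂ)
    {j : ℕ} (h : j < L) :
    Vmat L τ * site L A j * Phi L (fun l => eMat τ (l : ℕ))
      = site L (dMat τ j * A * eMat τ j) j := by
  rw [Vmat_eq_Phi, site_eq_Phi L A j h, Phi_mul, Phi_mul,
    site_eq_Phi L (dMat τ j * A * eMat τ j) j h]
  apply Phi_congr
  intro l
  by_cases hl : l = (⟨j, h⟩ : Fin L)
  · subst hl; simp
  · simp only [if_neg hl, mul_one]
    exact dm_mul_em τ hτ _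

lemma dMat_sminus (τ : ℂ) (j : ℕ) :
    dMat τ j * sigmaMinus * eMat τ j = (τ⁻¹) ^ (j + 1) • sigmaMinus := by
  ext a b
  fin_cases a <;> fin_cases b <;>
    simp [dMat, eMat, sigmaMinus, Matrix.mul_apply, Fin.sum_univ_two,
      Matrix.diagonal_apply]

lemma dMat_splus (τ : ℂ) (hτ : τ ≠ 0) (j : ℕ) :
    dMat τ j * sigmaPlus * eMat τ j = τ ^ (j + 1) • sigmaPlus := by
  ext a b
  fin_cases a <;> fin_cases b <;>
    simp [dMat, eMat, sigmaPlus, Matrix.mul_apply, Fin.sum_univ_two,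
      Matrix.diagonal_apply]

lemma dMat_num (τ : ℂ) (hτ : τ ≠ 0) (j : ℕ) :
    dMat τ j * numOp * eMat τ j = numOp := by
  ext a b
  fin_cases a <;> fin_cases b <;>
    simp [dMat, eMat, numOp, Matrix.mul_apply, Fin.sum_univ_two,
      Matrix.diagonal_apply, inv_pow, inv_mul_cancel₀ (pow_ne_zero _ hτ)]

lemma dMat_onesub (τ : ℂ) (hτ : τ ≠ 0) (j : ℕ) :
    dMat τ j * (1 - numOp) * eMat τ j = 1 - numOp := by
  ext a b
  fin_cases a <;> fin_cases b <;>
    simp [dMat, eMat, numOp, Matrix.mul_apply, Fin.sum_univ_two,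
      Matrix.diagonal_apply, Matrix.one_apply, inv_pow,
      inv_mul_cancel₀ (pow_ne_zero _ hτ)]


/-- Assuming `pq = 1`, the ASEP-to-XXZ change of basis:
`V 𝓛 V⁻¹` equals the XXZ-type operator with boundary fields, where
`A₁^± = (γτ ± ατ⁻¹)/2`, `B₁ = (γ−α)/2 + (τ−τ⁻¹)/4`,
`A_L^± = (βτ^L ± δτ^{−L})/2`, `B_L = (β−δ)/2 − (τ−τ⁻¹)/4`. -/
theorem asep_to_xxz (L : ℕ) (hL : 1 ≤ L) (p q α β γ δ : ℝ)
    (hp : 0 < p) (hq : 0 < q)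
    (hα : 0 ≤ α) (hβ : 0 ≤ β) (hγ : 0 ≤ γ) (hδ : 0 ≤ δ)
    (hpq : p * q = 1)
    (τ : ℂ) (hτ : τ = ((Real.sqrt (p / q) : ℝ) : ℂ)) :
    Vmat L τ * asepGen L p q α β γ δ * (Vmat L τ)⁻¹ =
      (-(1 / 2 : ℂ) * ((Real.sqrt (p * q) : ℝ) : ℂ)) •
        (∑ j ∈ Finset.range (L - 1),
          (site L sigmaX j * site L sigmaX (j + 1)
            + site L sigmaY j * site L sigmaY (j + 1)
            + ((τ + τ⁻¹) / 2) • (site L sigmaZ j * site L sigmaZ (j + 1))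
            - ((τ + τ⁻¹) / 2) • (1 : Matrix (Conf L) (Conf L) ℂ)))
      - (((γ : ℂ) * τ + (α : ℂ) * τ⁻¹) / 2) • site L sigmaX 0
      - (Complex.I * (((γ : ℂ) * τ - (α : ℂ) * τ⁻¹) / 2)) • site L sigmaY 0
      - (((γ : ℂ) - (α : ℂ)) / 2 + (τ - τ⁻¹) / 4) • site L sigmaZ 0
      - (((β : ℂ) * τ ^ L + (δ : ℂ) * τ⁻¹ ^ L) / 2) • site L sigmaX (L - 1)
      - (Complex.I * (((β : ℂ) * τ ^ L - (δ : ℂ) * τ⁻¹ ^ L) / 2)) • site L sigmaY (L - 1)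
      - (((β : ℂ) - (δ : ℂ)) / 2 - (τ - τ⁻¹) / 4) • site L sigmaZ (L - 1)
      + (((α : ℂ) + (β : ℂ) + (γ : ℂ) + (δ : ℂ)) / 2) • (1 : Matrix (Conf L) (Conf L) ℂ) := by
  have hτ0 : τ ≠ 0 := by
    rw [hτ]
    exact_mod_cast (Real.sqrt_pos.mpr (div_pos hp hq)).ne'
  set V := Vmat L τ with hV
  set W := Phi L (fun l : Fin L => eMat τ (l : ℕ)) with hW
  have hVW : V * W = 1 := V_mul_W L τ hτ0
  have hWV : W * V = 1 := W_mul_V L τ hτ0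
  have hsplit : ∀ X Y : Matrix (Conf L) (Conf L) ℂ,
      V * (X * Y) * W = (V * X * W) * (V * Y * W) := by
    intro X Y
    simp only [Matrix.mul_assoc]
    rw [← Matrix.mul_assoc W V (Y * W), hWV, Matrix.one_mul]
  have h0 : 0 < L := hL
  have hL1 : L - 1 < L := by omega
  have hcS : ∀ {j : ℕ}, j < L → V * site L sigmaMinus j * W = (τ⁻¹)^(j+1) • site L sigmaMinus j := by
    intro j h
    rw [conj_site L τ hτ0 _ h, dMat_sminus, site_smul h]
  have hcP : ∀ {j : ℕ}, j < L → V * site L sigmaPlus j * W = τ^(j+1) • site L sigmaPlus j := by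
    intro j h
    rw [conj_site L τ hτ0 _ h, dMat_splus τ hτ0, site_smul h]
  have hcN : ∀ {j : ℕ}, j < L → V * site L numOp j * W = site L numOp j := by
    intro j h
    rw [conj_site L τ hτ0 _ h, dMat_num τ hτ0]
  have hcO : ∀ {j : ℕ}, j < L → V * site L (1 - numOp) j * W = site L (1 - numOp) j := by
    intro j h
    rw [conj_site L τ hτ0 _ h, dMat_onesub τ hτ0]
  rw [show (Vmat L τ)⁻¹ = W from Matrix.inv_eq_right_inv hVW]
  rw [asepGen, ← hτ, hpq, Real.sqrt_one]
  simp only [Complex.ofReal_one]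
  -- distribute conjugation
  rw [Matrix.mul_sub, Matrix.sub_mul, Matrix.mul_sub, Matrix.sub_mul,
    Matrix.mul_sub, Matrix.sub_mul, Matrix.mul_sub, Matrix.sub_mul]
  rw [mul_smul_comm, smul_mul_assoc, mul_smul_comm, smul_mul_assoc,
    mul_smul_comm, smul_mul_assoc, mul_smul_comm, smul_mul_assoc,
    mul_smul_comm, smul_mul_assoc]
  rw [Finset.mul_sum, Finset.sum_mul]
  have hbulk : ∀ j ∈ Finset.range (L - 1),
      V * (τ⁻¹ • (site L sigmaMinus j * site L sigmaPlus (j + 1)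
            - site L (1 - numOp) j * site L numOp (j + 1))
        + τ • (site L sigmaMinus (j + 1) * site L sigmaPlus j
            - site L numOp j * site L (1 - numOp) (j + 1))) * W
      = (1/2 : ℂ) • (site L sigmaX j * site L sigmaX (j + 1)
          + site L sigmaY j * site L sigmaY (j + 1)
          + ((τ + τ⁻¹) / 2) • (site L sigmaZ j * site L sigmaZ (j + 1))
          - ((τ + τ⁻¹) / 2) • (1 : Matrix (Conf L) (Conf L) ℂ))
        + (((τ - τ⁻¹)/4) • site L sigmaZ j - ((τ - τ⁻¹)/4) • site L sigmaZ (j + 1)) := by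
    intro j hj
    have hj2 : j + 1 < L := by
      have := Finset.mem_range.mp hj; omega
    have hj1 : j < L := Nat.lt_of_succ_lt hj2
    rw [Matrix.mul_add, Matrix.add_mul, mul_smul_comm, smul_mul_assoc,
      mul_smul_comm, smul_mul_assoc, Matrix.mul_sub, Matrix.sub_mul,
      Matrix.mul_sub, Matrix.sub_mul]
    rw [hsplit, hsplit, hsplit, hsplit]
    rw [hcS hj1, hcP hj2, hcO hj1, hcN hj2, hcS hj2, hcP hj1, hcN hj1, hcO hj2]
    rw [← bulk_id L τ j hj2]
    rw [smul_mul_assoc, mul_smul_comm, smul_smul, smul_mul_assoc, mul_smul_comm, smul_smul]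
    have c1 : τ⁻¹ * ((τ⁻¹)^(j+1) * τ^(j+1+1)) = 1 := by
      rw [inv_pow, pow_succ τ (j+1), inv_mul_cancel_left₀ (pow_ne_zero _ hτ0),
        inv_mul_cancel₀ hτ0]
    have c2 : τ * ((τ⁻¹)^(j+1+1) * τ^(j+1)) = 1 := by
      rw [inv_pow, pow_succ τ (j+1), mul_inv, mul_comm ((τ ^ (j+1))⁻¹) τ⁻¹, mul_assoc,
        inv_mul_cancel₀ (pow_ne_zero _ hτ0), mul_one, mul_inv_cancel₀ hτ0]
    rw [smul_sub, smul_sub, smul_smul, smul_smul, c1, c2, one_smul, one_smul]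
    module
  rw [Finset.sum_congr rfl hbulk]
  rw [Finset.sum_add_distrib, ← Finset.smul_sum]
  rw [Finset.sum_range_sub' (fun j => ((τ - τ⁻¹)/4) • site L sigmaZ j) (L - 1)]
  -- boundary conjugations
  simp only [Matrix.mul_sub, Matrix.sub_mul, Matrix.mul_add, Matrix.add_mul, Matrix.mul_one]
  rw [hcS h0, hcP h0, hcN h0, hcS hL1, hcP hL1, hcN hL1, hVW]
  have hLpow : L - 1 + 1 = L := by omega
  rw [hLpow]
  -- express everything in Pauli basis
  have eSm : ∀ {j : ℕ}, j < L → site L sigmaMinus j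
      = (1/2 : ℂ) • site L sigmaX j - (Complex.I/2) • site L sigmaY j := by
    intro j h
    rw [← site_smul h, ← site_smul h, ← site_sub h, ← two_sminus]
  have eSp : ∀ {j : ℕ}, j < L → site L sigmaPlus j
      = (1/2 : ℂ) • site L sigmaX j + (Complex.I/2) • site L sigmaY j := by
    intro j h
    rw [← site_smul h, ← site_smul h, ← site_add h, ← two_splus]
  have eN : ∀ {j : ℕ}, j < L → site L numOp j
      = (1/2 : ℂ) • (1 : Matrix (Conf L) (Conf L) ℂ) - (1/2 : ℂ) • site L sigmaZ j := by
    intro j h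
    rw [← site_one h, ← site_smul h, ← site_smul h, ← site_sub h, ← two_num]
  rw [eSm h0, eSp h0, eN h0, eSm hL1, eSp hL1, eN hL1]
  module
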